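/- If T and S are Schwartz operators on L²(ℝ^N) and A is a bounded operator on L²(ℝ^N), then the product TAS is again a Schwartz operator, and for all multi-indices α, α', β, β' ∈ ℕ^N one has ‖TAS‖_{α,α',β,β'} ≤ ‖A‖ · ‖T‖_{α,0,β,0} · ‖S‖_{0,α',0,β'}, where ‖A‖ is the operator norm. -/

import Mathlib

open MeasureTheory SchwartzMap Complex

noncomputable section

/-- Configuration space ℝ^N. -/
abbrev Cfg (N : ℕ) := EuclideanSpace ℝ (Fin N)

/-- The Hilbert space L²(ℝ^N). -/
abbrev L2 (N : ℕ) := MeasureTheory.Lp ℂ 2 (volume : Measure (Cfg N))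

theorem schwartz_memL2 {N : ℕ} (f : 𝓢(Cfg N, ℂ)) :
    MeasureTheory.MemLp (⇑f) 2 (volume : Measure (Cfg N)) := by
  rw [MeasureTheory.memLp_two_iff_integrable_sq_norm f.continuous.aestronglyMeasurable]
  have h1 : MeasureTheory.Integrable (fun x => (SchwartzMap.seminorm ℝ 0 0 f) * ‖f x‖) volume :=
    f.integrable.norm.const_mul _
  refine h1.mono ((f.continuous.norm.pow 2).aestronglyMeasurable) ?_
  refine Filter.Eventually.of_forall fun x => ?_
  have h2 := SchwartzMap.norm_le_seminorm ℝ f x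
  have h3 : ‖f x‖ ^ 2 ≤ (SchwartzMap.seminorm ℝ 0 0 f) * ‖f x‖ := by
    rw [sq]; exact mul_le_mul_of_nonneg_right h2 (norm_nonneg _)
  calc ‖‖f x‖ ^ 2‖ = ‖f x‖ ^ 2 := by rw [Real.norm_of_nonneg (by positivity)]
    _ ≤ (SchwartzMap.seminorm ℝ 0 0 f) * ‖f x‖ := h3
    _ ≤ ‖(SchwartzMap.seminorm ℝ 0 0 f) * ‖f x‖‖ := le_abs_self _

/-- Embedding of Schwartz functions into L². -/
def toL2 {N : ℕ} (f : 𝓢(Cfg N, ℂ)) : L2 N := (schwartz_memL2 f).toLp ⇑f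

/-- The position operator Q_i (multiplication by the i-th coordinate). -/
def Qop {N : ℕ} (i : Fin N) (f : 𝓢(Cfg N, ℂ)) : 𝓢(Cfg N, ℂ) :=
  SchwartzMap.bilinLeftCLM ((ContinuousLinearMap.lsmul ℝ ℝ : ℝ →L[ℝ] ℂ →L[ℝ] ℂ).flip)
    ((EuclideanSpace.proj i : Cfg N →L[ℝ] ℝ).hasTemperateGrowth) f

/-- The momentum operator P_i = -i ∂/∂q_i. -/
def Pop {N : ℕ} (i : Fin N) (f : 𝓢(Cfg N, ℂ)) : 𝓢(Cfg N, ℂ) :=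
  (-Complex.I) • (LineDeriv.lineDerivOpCLM ℝ 𝓢(Cfg N, ℂ) (EuclideanSpace.single i (1:ℝ)) f)

/-- `opPow A α` is the operator `A₁^{α₁} ∘ ⋯ ∘ A_N^{α_N}`. -/
def opPow {σ : Type*} {N : ℕ} (A : Fin N → σ → σ) (α : Fin N → ℕ) : σ → σ :=
  (List.ofFn fun i => (A i)^[α i]).foldr (· ∘ ·) id

/-- `Q^α P^β` acting on Schwartz functions. -/
def QP {N : ℕ} (α β : Fin N → ℕ) (f : 𝓢(Cfg N, ℂ)) : 𝓢(Cfg N, ℂ) :=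
  opPow Qop α (opPow Pop β f)

/-- `P^β Q^α` acting on Schwartz functions. -/
def PQ {N : ℕ} (β α : Fin N → ℕ) (f : 𝓢(Cfg N, ℂ)) : 𝓢(Cfg N, ℂ) :=
  opPow Pop β (opPow Qop α f)

/-- The set of values `|⟨P^β Q^α ψ, T P^{β'} Q^{α'} φ⟩|` over normalized Schwartz `ψ, φ`. -/
def schwartzOpSet {N : ℕ} (T : L2 N →L[ℂ] L2 N) (α α' β β' : Fin N → ℕ) : Set ℝ :=
  { r | ∃ ψ φ : 𝓢(Cfg N, ℂ), ‖toL2 ψ‖ ≤ 1 ∧ ‖toL2 φ‖ ≤ 1 ∧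
      r = ‖(inner ℂ (toL2 (PQ β α ψ)) (T (toL2 (PQ β' α' φ))) : ℂ)‖ }

/-- The seminorm `‖T‖_{α,α',β,β'}` (as a supremum). -/
def opSeminorm {N : ℕ} (T : L2 N →L[ℂ] L2 N) (α α' β β' : Fin N → ℕ) : ℝ :=
  sSup (schwartzOpSet T α α' β β')

/-- A bounded operator on L²(ℝ^N) is a Schwartz operator if all the quantities
`‖T‖_{α,α',β,β'}` are finite. -/
def IsSchwartzOp {N : ℕ} (T : L2 N →L[ℂ] L2 N) : Prop :=
  ∀ α α' β β' : Fin N → ℕ, BddAbove (schwartzOpSet T α α' β β')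


open Metric Bornology Pointwise ContinuousLinearMap
open scoped Convolution ENNReal InnerProductSpace


/-- Smooth compactly supported functions are Schwartz. -/
def schwartzOfCS {N : ℕ} (f : Cfg N → ℂ) (hf : ContDiff ℝ ((⊤:ℕ∞)) f)
    (hsupp : HasCompactSupport f) : 𝓢(Cfg N, ℂ) where
  toFun := f
  smooth' := hf
  decay' := by
    intro k n
    have hcont : Continuous (iteratedFDeriv ℝ n f) :=
      hf.continuous_iteratedFDeriv (by exact_mod_cast le_top)
    have hsupp' : HasCompactSupport (iteratedFDeriv ℝ n f) := hsupp.iteratedFDeriv n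
    obtain ⟨C, hC⟩ := hsupp'.exists_bound_of_continuous hcont
    have hC0 : 0 ≤ C := le_trans (norm_nonneg _) (hC 0)
    obtain ⟨R, hR0, hR⟩ : ∃ R, 0 ≤ R ∧ tsupport (iteratedFDeriv ℝ n f) ⊆ closedBall 0 R := by
      obtain ⟨R, hR⟩ := (hsupp'.isCompact.isBounded).subset_closedBall 0
      exact ⟨max R 0, le_max_right _ _, hR.trans (closedBall_subset_closedBall (le_max_left _ _))⟩
    refine ⟨R ^ k * C, fun x => ?_⟩
    by_cases hx : x ∈ tsupport (iteratedFDeriv ℝ n f)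
    · have hxR : ‖x‖ ≤ R := by simpa [dist_eq_norm] using hR hx
      exact mul_le_mul (pow_le_pow_left₀ (norm_nonneg _) hxR k) (hC x) (norm_nonneg _)
        (by positivity)
    · rw [image_eq_zero_of_notMem_tsupport hx]
      simp [norm_zero, mul_nonneg (pow_nonneg hR0 k) hC0]

/-- Mollification: approximate a continuous compactly supported function in L² by a
smooth compactly supported function. -/
lemma smooth_approx {N : ℕ} {g : Cfg N → ℂ} (hg : Continuous g) (hgs : HasCompactSupport g)
    {ε : ℝ≥0∞} (hε : ε ≠ 0) (hε' : ε ≠ ⊤) :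
    ∃ h : Cfg N → ℂ, ContDiff ℝ ((⊤:ℕ∞)) h ∧ HasCompactSupport h ∧
      eLpNorm (g - h) 2 (volume : Measure (Cfg N)) ≤ ε := by
  classical
  set K : Set (Cfg N) := closedBall (0:Cfg N) 1 + tsupport g with hK
  have hKc : IsCompact K := (isCompact_closedBall (0:Cfg N) 1).add hgs
  have hKm : MeasurableSet K := hKc.isClosed.measurableSet
  set C : ℝ≥0∞ := (volume K) ^ (1 / (2:ℝ≥0∞).toReal) + 1 with hCdef
  have hC0 : C ≠ 0 := by simp [hCdef]
  have hCt : C ≠ ⊤ := by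
    have h1 : volume K ^ (1 / (2:ℝ≥0∞).toReal) ≠ ⊤ :=
      ENNReal.rpow_ne_top_of_nonneg (by norm_num) hKc.measure_lt_top.ne
    exact ENNReal.add_ne_top.2 ⟨h1, ENNReal.one_ne_top⟩
  set δ0 : ℝ≥0∞ := min 1 (ε / C) with hδ0def
  have hδ00 : δ0 ≠ 0 := by
    simp only [hδ0def, ne_eq, min_eq_iff, not_or]
    simp [ENNReal.div_eq_zero_iff, hε, hCt]
  have hδ0t : δ0 ≠ ⊤ := by simp [hδ0def]
  have hδ0C : δ0 * C ≤ ε := by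
    calc δ0 * C ≤ (ε / C) * C := by
          exact mul_le_mul_left (min_le_right _ _) C
      _ = ε := ENNReal.div_mul_cancel hC0 hCt
  set δ : ℝ := δ0.toReal with hδdef
  have hδpos : 0 < δ := ENNReal.toReal_pos hδ00 hδ0t
  -- uniform continuity
  have hgu : UniformContinuous g := hgs.uniformContinuous_of_continuous hg
  obtain ⟨r, hr0, hr⟩ := Metric.uniformContinuous_iff.1 hgu δ hδpos
  set r' : ℝ := min r 1 with hr'def
  have hr'0 : 0 < r' := lt_min hr0 one_pos
  set φ : ContDiffBump (0 : Cfg N) := ⟨r' / 2, r', half_pos hr'0, half_lt_self hr'0⟩ with hφdef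
  set h : Cfg N → ℂ := φ.normed volume ⋆[ContinuousLinearMap.lsmul ℝ ℝ, volume] g with hhdef
  have hsm : ContDiff ℝ ((⊤:ℕ∞)) h :=
    (φ.hasCompactSupport_normed).contDiff_convolution_left _ φ.contDiff_normed
      (hg.locallyIntegrable)
  have hcs : HasCompactSupport h :=
    (φ.hasCompactSupport_normed).convolution _ hgs
  refine ⟨h, hsm, hcs, ?_⟩
  have hdist : ∀ x, dist (h x) (g x) ≤ δ := by
    intro x
    refine ContDiffBump.dist_normed_convolution_le hg.aestronglyMeasurable ?_
    intro y hy
    have : dist y x < r := lt_of_lt_of_le (mem_ball.1 hy) (min_le_left _ _)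
    exact (hr this).le
  have hsupp_sub : ∀ x, x ∉ K → g x - h x = 0 := by
    intro x hx
    have hg0 : g x = 0 := by
      by_contra h0
      have hmem := Set.add_mem_add (mem_closedBall_self (x := (0:Cfg N)) (zero_le_one (α := ℝ)))
        (subset_tsupport g h0)
      rw [zero_add] at hmem
      exact hx hmem
    have hh0 : h x = 0 := by
      by_contra h0
      have hx' : x ∈ Function.support (φ.normed volume) + Function.support g := by
        have := support_convolution_subset (μ := volume)
          (L := ContinuousLinearMap.lsmul ℝ ℝ) (f := φ.normed volume) (g := g)
        exact this (by simpa [hhdef] using h0)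
      rcases Set.mem_add.1 hx' with ⟨a, ha, b, hb, rfl⟩
      have ha' : a ∈ closedBall (0 : Cfg N) 1 := by
        have : a ∈ ball (0 : Cfg N) φ.rOut := by rwa [← φ.support_normed_eq (μ := volume)]
        exact closedBall_subset_closedBall (min_le_right r 1) (ball_subset_closedBall this)
      exact hx (Set.add_mem_add ha' (subset_tsupport g hb))
    rw [hg0, hh0, sub_zero]
  have hmono : ∀ x, ‖(g - h) x‖ ≤ ‖K.indicator (fun _ => δ) x‖ := by
    intro x
    by_cases hx : x ∈ K
    · rw [Set.indicator_of_mem hx, Real.norm_of_nonneg hδpos.le]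
      rw [Pi.sub_apply, ← dist_eq_norm, dist_comm]
      exact hdist x
    · rw [Pi.sub_apply, hsupp_sub x hx]
      simp
  calc eLpNorm (g - h) 2 volume ≤ eLpNorm (K.indicator (fun _ => δ)) 2 volume :=
        eLpNorm_mono hmono
    _ = ‖δ‖₊ * (volume K) ^ (1 / (2:ℝ≥0∞).toReal) :=
        eLpNorm_indicator_const hKm (by norm_num) (by norm_num)
    _ ≤ δ0 * C := by
        refine mul_le_mul' ?_ ?_
        · rw [← enorm_eq_nnnorm, Real.enorm_eq_ofReal hδpos.le, ENNReal.ofReal_toReal hδ0t]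
        · exact le_self_add
    _ ≤ ε := hδ0C

lemma schwartz_dense {N : ℕ} (w : L2 N) {ε : ℝ} (hε : 0 < ε) :
    ∃ f : 𝓢(Cfg N, ℂ), ‖toL2 f - w‖ < ε := by
  have hw : MemLp (⇑w) 2 (volume : Measure (Cfg N)) := Lp.memLp w
  have hε3 : (0:ℝ) < ε / 3 := by linarith
  obtain ⟨g, hgsupp, hgL2, hgcont, hgmem⟩ :=
    hw.exists_hasCompactSupport_eLpNorm_sub_le (by norm_num : (2:ℝ≥0∞) ≠ ⊤)
      (ε := ENNReal.ofReal (ε / 3)) (by simp [hε3, ENNReal.ofReal_eq_zero, not_le])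
  obtain ⟨h, hsm, hcs, hL2⟩ := smooth_approx hgcont hgsupp
    (ε := ENNReal.ofReal (ε / 3)) (by simp [hε3, ENNReal.ofReal_eq_zero, not_le])
    ENNReal.ofReal_ne_top
  refine ⟨schwartzOfCS h hsm hcs, ?_⟩
  have hcoe : ⇑(schwartzOfCS h hsm hcs) = h := rfl
  have key : eLpNorm (h - ⇑w) 2 (volume : Measure (Cfg N)) ≤ ENNReal.ofReal (2 * ε / 3) := by
    have hdecomp : h - ⇑w = (h - g) + (g - ⇑w) := by ring
    rw [hdecomp]
    refine le_trans (eLpNorm_add_le ((hsm.continuous.aestronglyMeasurable).sub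
      hgcont.aestronglyMeasurable) (hgcont.aestronglyMeasurable.sub hw.1) (by norm_num)) ?_
    have h1 : eLpNorm (h - g) 2 (volume : Measure (Cfg N)) ≤ ENNReal.ofReal (ε / 3) := by
      rw [show h - g = -(g - h) by ring, eLpNorm_neg]; exact hL2
    have h2 : eLpNorm (g - ⇑w) 2 (volume : Measure (Cfg N)) ≤ ENNReal.ofReal (ε / 3) := by
      rw [show g - ⇑w = -(⇑w - g) by ring, eLpNorm_neg]; exact hgL2
    calc eLpNorm (h - g) 2 volume + eLpNorm (g - ⇑w) 2 volume
        ≤ ENNReal.ofReal (ε / 3) + ENNReal.ofReal (ε / 3) := add_le_add h1 h2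
      _ = ENNReal.ofReal (2 * ε / 3) := by
          rw [← ENNReal.ofReal_add hε3.le hε3.le]; ring_nf
  have heq : toL2 (schwartzOfCS h hsm hcs) - w =
      ((schwartz_memL2 (schwartzOfCS h hsm hcs)).sub hw).toLp (⇑(schwartzOfCS h hsm hcs) - ⇑w) := by
    rw [MemLp.toLp_sub (schwartz_memL2 (schwartzOfCS h hsm hcs)) hw]
    rw [MeasureTheory.Lp.toLp_coeFn w hw]
    rfl
  rw [heq, MeasureTheory.Lp.norm_toLp]
  calc (eLpNorm (⇑(schwartzOfCS h hsm hcs) - ⇑w) 2 volume).toReal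
      ≤ (ENNReal.ofReal (2 * ε / 3)).toReal := by
        refine ENNReal.toReal_mono ENNReal.ofReal_ne_top ?_
        rw [hcoe]; exact key
    _ = 2 * ε / 3 := ENNReal.toReal_ofReal (by linarith)
    _ < ε := by linarith


lemma toL2_zero {N : ℕ} : toL2 (0 : 𝓢(Cfg N, ℂ)) = 0 :=
  MemLp.toLp_zero _

lemma toL2_smul {N : ℕ} (c : ℂ) (f : 𝓢(Cfg N, ℂ)) : toL2 (c • f) = c • toL2 f :=
  MemLp.toLp_const_smul c _

lemma foldr_comp_apply_zero {σ : Type*} [Zero σ] (l : List (σ → σ)) (h : ∀ f ∈ l, f 0 = 0) :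
    l.foldr (· ∘ ·) id 0 = 0 := by
  induction l with
  | nil => rfl
  | cons a l ih =>
    simp only [List.foldr_cons, Function.comp_apply]
    rw [ih (fun f hf => h f (List.mem_cons_of_mem a hf)), h a List.mem_cons_self]

lemma opPow_apply_zero {σ : Type*} [Zero σ] {N : ℕ} (A : Fin N → σ → σ)
    (hA : ∀ i, A i 0 = 0) (α : Fin N → ℕ) : opPow A α 0 = 0 := by
  apply foldr_comp_apply_zero
  intro f hf
  simp only [List.mem_ofFn] at hf
  obtain ⟨i, rfl⟩ := hf
  exact Function.iterate_fixed (hA i) _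

lemma Qop_zero {N : ℕ} (i : Fin N) : Qop i 0 = 0 := by
  unfold Qop; exact map_zero _

lemma Pop_zero {N : ℕ} (i : Fin N) : Pop i 0 = 0 := by
  unfold Pop; rw [map_zero, smul_zero]

lemma PQ_apply_zero {N : ℕ} (β α : Fin N → ℕ) : PQ β α (0 : 𝓢(Cfg N, ℂ)) = 0 := by
  unfold PQ
  rw [opPow_apply_zero Qop Qop_zero, opPow_apply_zero Pop Pop_zero]

lemma foldr_replicate_id {σ : Type*} (n : ℕ) :
    (List.replicate n (_root_.id : σ → σ)).foldr (· ∘ ·) _root_.id = _root_.id := by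
  induction n with
  | zero => rfl
  | succ n ih => rw [List.replicate_succ, List.foldr_cons, ih]; rfl

lemma opPow_zero {σ : Type*} {N : ℕ} (A : Fin N → σ → σ) : opPow A 0 = _root_.id := by
  unfold opPow
  simp only [Pi.zero_apply, Function.iterate_zero]
  rw [List.ofFn_const]
  exact foldr_replicate_id N

lemma PQ_zero_zero {N : ℕ} (f : 𝓢(Cfg N, ℂ)) : PQ 0 0 f = f := by
  unfold PQ
  rw [opPow_zero, opPow_zero]
  rfl

lemma zero_mem_schwartzOpSet {N : ℕ} (T : L2 N →L[ℂ] L2 N) (α α' β β' : Fin N → ℕ) :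
    (0 : ℝ) ∈ schwartzOpSet T α α' β β' := by
  refine ⟨0, 0, ?_, ?_, ?_⟩
  · rw [toL2_zero]; simp
  · rw [toL2_zero]; simp
  · rw [PQ_apply_zero, toL2_zero, inner_zero_left, norm_zero]

lemma opSeminorm_nonneg {N : ℕ} {T : L2 N →L[ℂ] L2 N} {α α' β β' : Fin N → ℕ}
    (hT : BddAbove (schwartzOpSet T α α' β β')) : 0 ≤ opSeminorm T α α' β β' :=
  le_csSup hT (zero_mem_schwartzOpSet T α α' β β')

/-- If the pairing of `w` against all normalized Schwartz functions is bounded by `C`,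
then `‖w‖ ≤ C`. This uses density of Schwartz functions in L². -/
lemma norm_le_of_schwartz_pairing {N : ℕ} (w : L2 N) {C : ℝ} (hC : 0 ≤ C)
    (h : ∀ f : 𝓢(Cfg N, ℂ), ‖toL2 f‖ ≤ 1 → ‖(inner ℂ (toL2 f) w : ℂ)‖ ≤ C) : ‖w‖ ≤ C := by
  have h' : ∀ f : 𝓢(Cfg N, ℂ), ‖(inner ℂ (toL2 f) w : ℂ)‖ ≤ C * ‖toL2 f‖ := by
    intro f
    by_cases hf : ‖toL2 f‖ = 0
    · rw [norm_eq_zero] at hf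
      rw [hf, inner_zero_left, norm_zero]
      positivity
    · have hfpos : 0 < ‖toL2 f‖ := lt_of_le_of_ne (norm_nonneg _) (Ne.symm hf)
      set c : ℝ := ‖toL2 f‖ with hc
      have hnorm : ‖toL2 ((c⁻¹ : ℂ) • f)‖ = 1 := by
        rw [toL2_smul, norm_smul]
        simp only [norm_inv, Complex.norm_real, Real.norm_of_nonneg hfpos.le]
        field_simp
        exact hc.symm
      have key := h ((c⁻¹ : ℂ) • f) (le_of_eq hnorm)
      rw [toL2_smul, inner_smul_left] at key
      rw [norm_mul, RCLike.norm_conj] at key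
      simp only [norm_inv, Complex.norm_real, Real.norm_of_nonneg hfpos.le] at key
      calc ‖(inner ℂ (toL2 f) w : ℂ)‖ = c * (c⁻¹ * ‖(inner ℂ (toL2 f) w : ℂ)‖) := by
            field_simp
        _ ≤ c * C := by
            exact mul_le_mul_of_nonneg_left key hfpos.le
        _ = C * c := mul_comm _ _
  by_cases hw : ‖w‖ = 0
  · rw [hw]; exact hC
  have hwpos : 0 < ‖w‖ := lt_of_le_of_ne (norm_nonneg _) (Ne.symm hw)
  have key : ‖w‖ * ‖w‖ ≤ C * ‖w‖ := by
    by_contra hcon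
    push_neg at hcon
    set M : ℝ := C + ‖w‖ + 1 with hM
    have hMpos : 0 < M := by positivity
    set ε : ℝ := (‖w‖ * ‖w‖ - C * ‖w‖) / (2 * M) with hε
    have hεpos : 0 < ε := by
      apply div_pos (by linarith) (by positivity)
    obtain ⟨f, hf⟩ := schwartz_dense w hεpos
    have h1 : ‖toL2 f‖ ≤ ‖w‖ + ε := by
      calc ‖toL2 f‖ = ‖(toL2 f - w) + w‖ := by rw [sub_add_cancel]
        _ ≤ ‖toL2 f - w‖ + ‖w‖ := norm_add_le _ _
        _ ≤ ε + ‖w‖ := by linarith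
        _ = ‖w‖ + ε := add_comm _ _
    have hsub : (inner ℂ (w - toL2 f) w : ℂ) = inner ℂ w w - inner ℂ (toL2 f) w :=
      inner_sub_left _ _ _
    have e1 : ‖w‖ * ‖w‖ = RCLike.re (inner ℂ w w : ℂ) :=
      (inner_self_eq_norm_mul_norm w).symm
    have e2 : RCLike.re (inner ℂ w w : ℂ) =
        RCLike.re (inner ℂ (toL2 f) w : ℂ) + RCLike.re (inner ℂ (w - toL2 f) w : ℂ) := by
      rw [hsub, map_sub]; ring
    have e3 : RCLike.re (inner ℂ (toL2 f) w : ℂ) ≤ C * (‖w‖ + ε) := by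
      refine le_trans (RCLike.re_le_norm _) (le_trans (h' f) ?_)
      exact mul_le_mul_of_nonneg_left h1 hC
    have e4 : RCLike.re (inner ℂ (w - toL2 f) w : ℂ) ≤ ε * ‖w‖ := by
      refine le_trans (RCLike.re_le_norm _) (le_trans (norm_inner_le_norm _ _) ?_)
      rw [norm_sub_rev]
      exact mul_le_mul_of_nonneg_right hf.le (norm_nonneg _)
    have hεM : 2 * (M * ε) = ‖w‖ * ‖w‖ - C * ‖w‖ := by
      rw [hε]; field_simp
    nlinarith [hεpos, hwpos, hC]
  exact le_of_mul_le_mul_right (by linarith [key]) hwpos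

set_option maxHeartbeats 2000000 in
/-- If `T, S` are Schwartz operators and `A` is bounded, then `TAS` is a Schwartz operator and
`‖TAS‖_{α,α',β,β'} ≤ ‖A‖·‖T‖_{α,0,β,0}·‖S‖_{0,α',0,β'}`. -/
theorem schwartzOp_sandwich {N : ℕ} (T S A : L2 N →L[ℂ] L2 N)
    (hT : IsSchwartzOp T) (hS : IsSchwartzOp S) :
    IsSchwartzOp (T ∘L A ∘L S) ∧
      ∀ α α' β β' : Fin N → ℕ,
        opSeminorm (T ∘L A ∘L S) α α' β β' ≤
          ‖A‖ * opSeminorm T α 0 β 0 * opSeminorm S 0 α' 0 β' := by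
  have key : ∀ α α' β β' : Fin N → ℕ, ∀ r ∈ schwartzOpSet (T ∘L A ∘L S) α α' β β',
      r ≤ ‖A‖ * opSeminorm T α 0 β 0 * opSeminorm S 0 α' 0 β' := by
    intro α α' β β' r hr
    obtain ⟨ψ, φ, hψ, hφ, rfl⟩ := hr
    set x : L2 N := toL2 (PQ β α ψ) with hx
    set y : L2 N := toL2 (PQ β' α' φ) with hy
    set cT : ℝ := opSeminorm T α 0 β 0 with hcT
    set cS : ℝ := opSeminorm S 0 α' 0 β' with hcS
    have hcT0 : 0 ≤ cT := opSeminorm_nonneg (hT α 0 β 0)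
    have hcS0 : 0 ≤ cS := opSeminorm_nonneg (hS 0 α' 0 β')
    -- bound on the adjoint applied to x
    have hTbound : ‖ContinuousLinearMap.adjoint T x‖ ≤ cT := by
      refine norm_le_of_schwartz_pairing _ hcT0 (fun f hf => ?_)
      have : ‖(inner ℂ (toL2 f) (ContinuousLinearMap.adjoint T x) : ℂ)‖ =
          ‖(inner ℂ x (T (toL2 (PQ 0 0 f))) : ℂ)‖ := by
        rw [PQ_zero_zero, norm_inner_symm, ContinuousLinearMap.adjoint_inner_left]
      rw [this]
      exact le_csSup (hT α 0 β 0) ⟨ψ, f, hψ, hf, rfl⟩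
    -- bound on S y
    have hSbound : ‖S y‖ ≤ cS := by
      refine norm_le_of_schwartz_pairing _ hcS0 (fun f hf => ?_)
      have : ‖(inner ℂ (toL2 f) (S y) : ℂ)‖ =
          ‖(inner ℂ (toL2 (PQ 0 0 f)) (S (toL2 (PQ β' α' φ))) : ℂ)‖ := by
        rw [PQ_zero_zero]
      rw [this]
      exact le_csSup (hS 0 α' 0 β') ⟨f, φ, hf, hφ, rfl⟩
    have hcomp : (T ∘L A ∘L S) y = T (A (S y)) := rfl
    calc ‖(inner ℂ x ((T ∘L A ∘L S) y) : ℂ)‖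
        = ‖(inner ℂ (ContinuousLinearMap.adjoint T x) (A (S y)) : ℂ)‖ := by
          rw [hcomp, ContinuousLinearMap.adjoint_inner_left]
      _ ≤ ‖ContinuousLinearMap.adjoint T x‖ * ‖A (S y)‖ := norm_inner_le_norm _ _
      _ ≤ ‖ContinuousLinearMap.adjoint T x‖ * (‖A‖ * ‖S y‖) := by
          exact mul_le_mul_of_nonneg_left (A.le_opNorm _) (norm_nonneg _)
      _ ≤ cT * (‖A‖ * cS) := by
          refine mul_le_mul hTbound ?_ (by positivity) hcT0
          exact mul_le_mul_of_nonneg_left hSbound (norm_nonneg _)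
      _ = ‖A‖ * cT * cS := by ring
  constructor
  · intro α α' β β'
    exact ⟨_, key α α' β β'⟩
  · intro α α' β β'
    exact csSup_le ⟨0, zero_mem_schwartzOpSet _ _ _ _ _⟩ (key α α' β β')

end
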